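/- The function ψ(x) = (√2·x² − 1)·exp(−x⁴/4) satisfies the Schrödinger equation −ψ'' + (x⁶ − 7x²)ψ = λψ with eigenvalue λ = 2√2. -/

import Mathlib

private lemma hexp (x : ℝ) :
    HasDerivAt (fun y : ℝ => Real.exp (-y ^ 4 / 4)) (-x ^ 3 * Real.exp (-x ^ 4 / 4)) x := by
  have h1 : HasDerivAt (fun y : ℝ => -y ^ 4 / 4) (-x ^ 3) x := by
    have := (hasDerivAt_pow 4 x).neg.div_const 4
    exact this.congr_deriv (by ring)
  have := h1.exp
  exact this.congr_deriv (by ring)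

private lemma hpsi (x : ℝ) :
    HasDerivAt (fun y : ℝ => (Real.sqrt 2 * y ^ 2 - 1) * Real.exp (-y ^ 4 / 4))
      ((2 * Real.sqrt 2 * x + x ^ 3 - Real.sqrt 2 * x ^ 5) * Real.exp (-x ^ 4 / 4)) x := by
  have h1 : HasDerivAt (fun y : ℝ => Real.sqrt 2 * y ^ 2 - 1) (2 * Real.sqrt 2 * x) x := by
    have := ((hasDerivAt_pow 2 x).const_mul (Real.sqrt 2)).sub_const 1
    exact this.congr_deriv (by ring)
  have := h1.mul (hexp x)
  exact this.congr_deriv (by ring)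

private lemma hpsi' (x : ℝ) :
    HasDerivAt (fun y : ℝ =>
        (2 * Real.sqrt 2 * y + y ^ 3 - Real.sqrt 2 * y ^ 5) * Real.exp (-y ^ 4 / 4))
      ((2 * Real.sqrt 2 + 3 * x ^ 2 - 7 * Real.sqrt 2 * x ^ 4 - x ^ 6 + Real.sqrt 2 * x ^ 8)
        * Real.exp (-x ^ 4 / 4)) x := by
  have h1 : HasDerivAt (fun y : ℝ => 2 * Real.sqrt 2 * y + y ^ 3 - Real.sqrt 2 * y ^ 5)
      (2 * Real.sqrt 2 + 3 * x ^ 2 - 5 * Real.sqrt 2 * x ^ 4) x := by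
    have := ((hasDerivAt_id x).const_mul (2 * Real.sqrt 2)).add (hasDerivAt_pow 3 x)
      |>.sub ((hasDerivAt_pow 5 x).const_mul (Real.sqrt 2))
    exact this.congr_deriv (by push_cast; ring)
  have := h1.mul (hexp x)
  exact this.congr_deriv (by ring)

/-- The function ψ(x) = (√2·x² − 1)·exp(−x⁴/4) satisfies
−ψ'' + (x⁶ − 7x²)ψ = λψ with eigenvalue λ = 2√2. -/
theorem stmt1 :
    ∀ x : ℝ,
      -(deriv (deriv (fun y : ℝ => (Real.sqrt 2 * y ^ 2 - 1) * Real.exp (-y ^ 4 / 4))) x)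
        + (x ^ 6 - 7 * x ^ 2) * ((Real.sqrt 2 * x ^ 2 - 1) * Real.exp (-x ^ 4 / 4))
      = (2 * Real.sqrt 2) * ((Real.sqrt 2 * x ^ 2 - 1) * Real.exp (-x ^ 4 / 4)) := by
  intro x
  have hd : deriv (fun y : ℝ => (Real.sqrt 2 * y ^ 2 - 1) * Real.exp (-y ^ 4 / 4))
      = fun y : ℝ => (2 * Real.sqrt 2 * y + y ^ 3 - Real.sqrt 2 * y ^ 5) * Real.exp (-y ^ 4 / 4) := by
    funext y; exact (hpsi y).deriv
  rw [hd, (hpsi' x).deriv]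
  have h2 : Real.sqrt 2 * Real.sqrt 2 = 2 := Real.mul_self_sqrt (by norm_num)
  linear_combination (-2 * x ^ 2 * Real.exp (-x ^ 4 / 4)) * h2
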